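/- For all real numbers x ≥ 0 and a ≥ 1, arsinh(x/a) ≤ √(πx/2). -/

import Mathlib

open Real MeasureTheory

/-- Inverse hyperbolic tangent on `(-1, 1)`. -/
noncomputable def Real.artanhAux (x : ℝ) : ℝ := (1 / 2) * Real.log ((1 + x) / (1 - x))

/-- Matrix-vector multiplication viewed as a map between Euclidean spaces. -/
noncomputable def mulVecE {d d' : ℕ} (P : Matrix (Fin d') (Fin d) ℝ)
    (x : EuclideanSpace ℝ (Fin d)) : EuclideanSpace ℝ (Fin d') :=
  (EuclideanSpace.equiv (Fin d') ℝ).symm (P.mulVec (EuclideanSpace.equiv (Fin d) ℝ x))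

/-- Möbius matrix multiplication `P^{⊗_s} x` on the Poincaré ball of radius `s`.
When `P.mulVec x = 0` this evaluates to `0`, as required. -/
noncomputable def mobiusMat {d d' : ℕ} (s : ℝ) (P : Matrix (Fin d') (Fin d) ℝ)
    (x : EuclideanSpace ℝ (Fin d)) : EuclideanSpace ℝ (Fin d') :=
  (s * Real.tanh ((‖mulVecE P x‖ / ‖x‖) * Real.artanhAux (‖x‖ / s)) / ‖mulVecE P x‖) • mulVecE P x

/-- Frobenius norm of a real matrix. -/
noncomputable def frobNorm {m n : ℕ} (P : Matrix (Fin m) (Fin n) ℝ) : ℝ :=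
  Real.sqrt (∑ i, ∑ j, (P i j) ^ 2)

/-- Lorentz gamma factor `γ_x = 1/√(1 - ‖x‖²/s²)`. -/
noncomputable def lorentzGamma {d : ℕ} (s : ℝ) (x : EuclideanSpace ℝ (Fin d)) : ℝ :=
  1 / Real.sqrt (1 - ‖x‖ ^ 2 / s ^ 2)

/-- Poincaré distance `d_s(x,y) = 2s·arsinh(γ_x γ_y ‖x - y‖ / s)`. -/
noncomputable def dPoin {d : ℕ} (s : ℝ) (x y : EuclideanSpace ℝ (Fin d)) : ℝ :=
  2 * s * Real.arsinh (lorentzGamma s x * lorentzGamma s y * ‖x - y‖ / s)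

/-- Möbius addition on the Poincaré ball of radius `s`. -/
noncomputable def mobiusAdd {d : ℕ} (s : ℝ) (x y : EuclideanSpace ℝ (Fin d)) :
    EuclideanSpace ℝ (Fin d) :=
  ((1 + 2 / s ^ 2 * (inner ℝ x y : ℝ) + 1 / s ^ 2 * ‖y‖ ^ 2) /
      (1 + 2 / s ^ 2 * (inner ℝ x y : ℝ) + 1 / s ^ 4 * ‖x‖ ^ 2 * ‖y‖ ^ 2)) • x +
    ((1 - 1 / s ^ 2 * ‖x‖ ^ 2) /
      (1 + 2 / s ^ 2 * (inner ℝ x y : ℝ) + 1 / s ^ 4 * ‖x‖ ^ 2 * ‖y‖ ^ 2)) • y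

/-- Exponential map at the origin of the Poincaré ball of radius `s`. -/
noncomputable def expZero {d : ℕ} (s : ℝ) (v : EuclideanSpace ℝ (Fin d)) :
    EuclideanSpace ℝ (Fin d) :=
  (s * Real.tanh (‖v‖ / s) / ‖v‖) • v

/-- Logarithmic map at the origin of the Poincaré ball of radius `s`. -/
noncomputable def logZero {d : ℕ} (s : ℝ) (y : EuclideanSpace ℝ (Fin d)) :
    EuclideanSpace ℝ (Fin d) :=
  (s * Real.artanhAux (‖y‖ / s) / ‖y‖) • y


lemma arsinh_le_aux (t : ℝ) (ht : 0 < t) (x : ℝ) (hx : 0 ≤ x) :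
    Real.arsinh x ≤ (t * Real.arctan x + x / t) / 2 := by
  set F : ℝ → ℝ := fun y => (t * Real.arctan y + y / t) / 2 - Real.arsinh y with hF
  have key : ∀ y : ℝ, HasDerivAt F
      ((t * (1 / (1 + y ^ 2)) + 1 / t) / 2 - (Real.sqrt (1 + y ^ 2))⁻¹) y := by
    intro y
    have h1 := (Real.hasDerivAt_arctan y).const_mul t
    have h2 : HasDerivAt (fun z : ℝ => z / t) (1 / t) y := by
      simpa using (hasDerivAt_id y).div_const t
    exact ((h1.add h2).div_const 2).sub (Real.hasDerivAt_arsinh y)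
  have hderiv_nonneg : ∀ y : ℝ, 0 ≤ (t * (1 / (1 + y ^ 2)) + 1 / t) / 2 -
      (Real.sqrt (1 + y ^ 2))⁻¹ := by
    intro y
    have hy : (0:ℝ) < 1 + y ^ 2 := by positivity
    set s := Real.sqrt (1 + y ^ 2) with hs
    have hs0 : 0 < s := Real.sqrt_pos.mpr hy
    have hs2 : s ^ 2 = 1 + y ^ 2 := Real.sq_sqrt hy.le
    rw [← hs2]
    have h := sq_nonneg (t - s)
    have : (t * (1 / s ^ 2) + 1 / t) / 2 - s⁻¹ =
        (t - s) ^ 2 / (2 * t * s ^ 2) := by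
      field_simp
      ring
    rw [this]
    positivity
  have hmono : MonotoneOn F (Set.Ici (0:ℝ)) := by
    apply monotoneOn_of_deriv_nonneg (convex_Ici 0)
    · exact Continuous.continuousOn
        ((((continuous_const.mul Real.continuous_arctan).add
          (continuous_id.div_const t)).div_const 2).sub Real.continuous_arsinh)
    · intro y _
      exact (key y).differentiableAt.differentiableWithinAt
    · intro y _
      rw [(key y).deriv]
      exact hderiv_nonneg y
  have h0 : F 0 = 0 := by simp [hF]
  have := hmono (Set.self_mem_Ici) (Set.mem_Ici.mpr hx) hx
  rw [h0] at this
  have : 0 ≤ (t * Real.arctan x + x / t) / 2 - Real.arsinh x := this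
  linarith

/-- For all real `x ≥ 0` and `a ≥ 1`, `arsinh(x/a) ≤ √(πx/2)`. -/
theorem stmt0 (x a : ℝ) (hx : 0 ≤ x) (ha : 1 ≤ a) :
    Real.arsinh (x / a) ≤ Real.sqrt (Real.pi * x / 2) := by
  have hstep : Real.arsinh (x / a) ≤ Real.arsinh x :=
    Real.arsinh_le_arsinh.mpr (div_le_self hx ha)
  rcases eq_or_lt_of_le hx with h0 | hxpos
  · rw [← h0]
    simp
  · set t := Real.sqrt (2 * x / Real.pi) with hts
    have hpi := Real.pi_pos
    have ht : 0 < t := Real.sqrt_pos.mpr (by positivity)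
    have ht2 : t ^ 2 = 2 * x / Real.pi := Real.sq_sqrt (by positivity)
    have hb := arsinh_le_aux t ht x hx
    have harctan : Real.arctan x ≤ Real.pi / 2 := (Real.arctan_lt_pi_div_two x).le
    have hR : Real.sqrt (Real.pi * x / 2) = t * Real.pi / 2 := by
      rw [hts, show Real.pi * x / 2 = (2 * x / Real.pi) * (Real.pi / 2) ^ 2 by
        field_simp, Real.sqrt_mul (by positivity), Real.sqrt_sq (by positivity)]
      ring
    have hxt : x / t = t * Real.pi / 2 := by
      have : x = t ^ 2 * Real.pi / 2 := by rw [ht2]; field_simp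
      rw [this]
      field_simp
    calc Real.arsinh (x / a) ≤ Real.arsinh x := hstep
      _ ≤ (t * Real.arctan x + x / t) / 2 := hb
      _ ≤ (t * (Real.pi / 2) + t * Real.pi / 2) / 2 := by
          rw [hxt]
          have := mul_le_mul_of_nonneg_left harctan ht.le
          linarith
      _ = t * Real.pi / 2 := by ring
      _ = Real.sqrt (Real.pi * x / 2) := hR.symm
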